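/- Let Z = ∏_{p ∈ P} ℤ/n_p. The matrices T_k := ⊗_{p ∈ k}(n_p I_{n_p} - J_{n_p}) ⊗_{q ∉ k} J_{n_q}, for k ranging over subsets of P, form a positive basis for the cone of matrices B of the form B_{ij} = b_{(j-i,P)} that are positive semidefinite: such a B is PSD if and only if B = ∑_k w_k T_k for some weights w_k ≥ 0. -/

import Mathlib

open Matrix

variable {P : Type*} [Fintype P] [DecidableEq P]

/-- The structured matrix `B_{ij} = b_{(j-i,P)}` on `Z = ∏_p ℤ/n_p`. -/
noncomputable def sieveMatrix (n : P → ℕ) [∀ p, NeZero (n p)] (b : Finset P → ℝ) :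
    Matrix ((p : P) → ZMod (n p)) ((p : P) → ZMod (n p)) ℝ :=
  fun i j => b (Finset.univ.filter fun p => j p - i p = 0)

/-- The basis matrix `T_k = ⊗_{p ∈ k}(n_p I - J) ⊗_{q ∉ k} J`, written entrywise
on the product index set `∏_p ℤ/n_p`. -/
noncomputable def basisMatrix (n : P → ℕ) [∀ p, NeZero (n p)] (k : Finset P) :
    Matrix ((p : P) → ZMod (n p)) ((p : P) → ZMod (n p)) ℝ :=
  fun i j => ∏ p ∈ k, ((if i p = j p then (n p : ℝ) else 0) - 1)

section Aux
open Finset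
variable (n : P → ℕ) [∀ p, NeZero (n p)]

/-- abbreviation for the factor entries -/
noncomputable def Dfac (p : P) (a c : ZMod (n p)) : ℝ :=
  (if a = c then (n p : ℝ) else 0) - 1

lemma sum_ite_nat (p : P) (a : ZMod (n p)) :
    (∑ c : ZMod (n p), (if a = c then (n p : ℝ) else 0)) = (n p : ℝ) := by
  simp [Finset.sum_ite_eq]

lemma Dfac_symm (p : P) (a c : ZMod (n p)) : Dfac n p a c = Dfac n p c a := by
  simp [Dfac, eq_comm]

lemma sum_Dfac_right (p : P) (a : ZMod (n p)) : ∑ c : ZMod (n p), Dfac n p a c = 0 := by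
  simp only [Dfac, Finset.sum_sub_distrib, sum_ite_nat, Finset.sum_const, Finset.card_univ,
    ZMod.card, nsmul_eq_mul, mul_one, sub_self]

lemma sum_Dfac_left (p : P) (a : ZMod (n p)) : ∑ c : ZMod (n p), Dfac n p c a = 0 := by
  simp_rw [Dfac_symm n p _ a]; exact sum_Dfac_right n p a

lemma sum_Dfac_mul (p : P) (a c : ZMod (n p)) :
    ∑ x : ZMod (n p), Dfac n p a x * Dfac n p x c = (n p : ℝ) * Dfac n p a c := by
  have expand : ∀ x : ZMod (n p), Dfac n p a x * Dfac n p x c =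
      (if a = x then (n p : ℝ) else 0) * (if x = c then (n p : ℝ) else 0)
        - (if a = x then (n p : ℝ) else 0) - (if x = c then (n p : ℝ) else 0) + 1 := by
    intro x; simp only [Dfac]; ring
  simp_rw [expand]
  have h1 : ∑ x : ZMod (n p), (if a = x then (n p : ℝ) else 0) * (if x = c then (n p : ℝ) else 0)
      = (if a = c then (n p : ℝ) * (n p : ℝ) else 0) := by
    simp [ite_mul, Finset.sum_ite_eq]
  simp only [Finset.sum_add_distrib, Finset.sum_sub_distrib, h1, sum_ite_nat,
    Finset.sum_const, Finset.card_univ, ZMod.card, nsmul_eq_mul, mul_one]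
  have h2 : ∑ x : ZMod (n p), (if a = x then (n p : ℝ) else 0) = (n p : ℝ) := sum_ite_nat n p a
  simp only [Dfac]
  by_cases h : a = c <;> simp [h] <;> ring

lemma basisMatrix_apply' (k : Finset P) (i j : (p : P) → ZMod (n p)) :
    basisMatrix n k i j = ∏ p, (if p ∈ k then Dfac n p (i p) (j p) else 1) := by
  rw [basisMatrix, ← Fintype.prod_ite_mem]
  rfl

lemma basisMatrix_symm (k : Finset P) (i j : (p : P) → ZMod (n p)) :
    basisMatrix n k j i = basisMatrix n k i j := by
  simp [basisMatrix, eq_comm]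

/-- factorization of the double sum over the product group -/
lemma sum_pi_prod (f : ∀ p, ZMod (n p) → ℝ) :
    ∑ m : (p : P) → ZMod (n p), ∏ p, f p (m p) = ∏ p, ∑ a, f p a :=
  (Fintype.prod_sum f).symm

lemma basis_mul_apply (k s : Finset P) (i j : (p : P) → ZMod (n p)) :
    (basisMatrix n k * basisMatrix n s) i j =
      ∏ p, ∑ a : ZMod (n p),
        (if p ∈ k then Dfac n p (i p) a else 1) * (if p ∈ s then Dfac n p a (j p) else 1) := by
  rw [Matrix.mul_apply, ← sum_pi_prod]
  refine Finset.sum_congr rfl fun m _ => ?_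
  rw [basisMatrix_apply', basisMatrix_apply', ← Finset.prod_mul_distrib]

lemma basis_mul_basis_ne (k s : Finset P) (h : k ≠ s) :
    basisMatrix n k * basisMatrix n s = 0 := by
  ext i j
  rw [basis_mul_apply]
  have : ∃ p, (p ∈ k ∧ p ∉ s) ∨ (p ∉ k ∧ p ∈ s) := by
    by_contra hc
    push_neg at hc
    exact h (Finset.ext fun p => by have := hc p; tauto)
  obtain ⟨p, hp⟩ := this
  rw [Matrix.zero_apply]
  refine Finset.prod_eq_zero (Finset.mem_univ p) ?_
  rcases hp with ⟨h1, h2⟩ | ⟨h1, h2⟩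
  · simp [h1, h2, sum_Dfac_right]
  · simp [h1, h2, sum_Dfac_left]

lemma basis_mul_self (k : Finset P) :
    basisMatrix n k * basisMatrix n k = (∏ p, (n p : ℝ)) • basisMatrix n k := by
  ext i j
  rw [basis_mul_apply, Matrix.smul_apply, basisMatrix_apply', smul_eq_mul,
    ← Finset.prod_mul_distrib]
  refine Finset.prod_congr rfl fun p _ => ?_
  by_cases h : p ∈ k
  · simp [h, sum_Dfac_mul]
  · simp [h, Finset.card_univ, ZMod.card]

end Aux

section Main
variable (n : P → ℕ) [∀ p, NeZero (n p)]

noncomputable def wgt (b : Finset P → ℝ) (k : Finset P) : ℝ :=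
  (∑ s : Finset P, b s * ((-1 : ℝ) ^ ((k \ s).card) * ∏ p ∈ (k ∪ s)ᶜ, ((n p : ℝ) - 1)))
    / ∏ p, (n p : ℝ)

lemma prodN_ne_zero : (∏ p, (n p : ℝ)) ≠ 0 := by
  refine Finset.prod_ne_zero_iff.mpr fun p _ => ?_
  exact Nat.cast_ne_zero.mpr (NeZero.ne (n p))

/-- the key inversion identity -/
lemma key_inversion (s d : Finset P) :
    ∑ k : Finset P, ((-1 : ℝ) ^ ((k \ s).card) * ∏ p ∈ (k ∪ s)ᶜ, ((n p : ℝ) - 1)) *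
        ∏ p ∈ k, ((if p ∈ d then (n p : ℝ) else 0) - 1)
      = if s = d then ∏ p, (n p : ℝ) else 0 := by
  have expand := Fintype.prod_add
    (fun p => (if p ∈ s then (1 : ℝ) else -1) * ((if p ∈ d then (n p : ℝ) else 0) - 1))
    (fun p => if p ∈ s then (1 : ℝ) else (n p : ℝ) - 1)
  have lhs_eq : ∑ k : Finset P,
      (∏ p ∈ k, (if p ∈ s then (1 : ℝ) else -1) * ((if p ∈ d then (n p : ℝ) else 0) - 1)) *
        ∏ p ∈ kᶜ, (if p ∈ s then (1 : ℝ) else (n p : ℝ) - 1)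
      = ∑ k : Finset P, ((-1 : ℝ) ^ ((k \ s).card) * ∏ p ∈ (k ∪ s)ᶜ, ((n p : ℝ) - 1)) *
        ∏ p ∈ k, ((if p ∈ d then (n p : ℝ) else 0) - 1) := by
    refine Finset.sum_congr rfl fun k _ => ?_
    have h1 : ∏ p ∈ k, (if p ∈ s then (1 : ℝ) else -1) = (-1 : ℝ) ^ ((k \ s).card) := by
      rw [Finset.sdiff_eq_filter, ← Finset.prod_const]
      rw [Finset.prod_filter]
      refine Finset.prod_congr rfl fun p _ => ?_
      by_cases h : p ∈ s <;> simp [h]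
    have h2 : ∏ p ∈ kᶜ, (if p ∈ s then (1 : ℝ) else (n p : ℝ) - 1)
        = ∏ p ∈ (k ∪ s)ᶜ, ((n p : ℝ) - 1) := by
      have : (k ∪ s)ᶜ = kᶜ.filter (fun p => p ∉ s) := by
        ext p; simp [not_or, and_comm]
      rw [this, Finset.prod_filter]
      refine Finset.prod_congr rfl fun p _ => ?_
      by_cases h : p ∈ s <;> simp [h]
    rw [Finset.prod_mul_distrib, h1, h2]; ring
  rw [← lhs_eq, ← expand]
  have per_p : ∀ p : P,
      (if p ∈ s then (1 : ℝ) else -1) * ((if p ∈ d then (n p : ℝ) else 0) - 1) +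
        (if p ∈ s then (1 : ℝ) else (n p : ℝ) - 1)
      = if (p ∈ s) = (p ∈ d) then (n p : ℝ) else 0 := by
    intro p
    by_cases hs : p ∈ s <;> by_cases hd : p ∈ d <;> simp [hs, hd] <;> ring
  simp_rw [per_p]
  by_cases h : s = d
  · subst h
    simp
  · have : ∃ p, ¬ ((p ∈ s) = (p ∈ d)) := by
      by_contra hc
      push_neg at hc
      exact h (Finset.ext fun p => by rw [← hc p] <;> tauto)
    obtain ⟨p, hp⟩ := this
    rw [if_neg h]
    exact Finset.prod_eq_zero (Finset.mem_univ p) (by simp [hp])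

lemma key_inversion' (s d : Finset P) :
    ∑ k : Finset P, (-1 : ℝ) ^ ((k \ s).card) *
        ((∏ p ∈ (k ∪ s)ᶜ, ((n p : ℝ) - 1)) * ∏ p ∈ k, ((if p ∈ d then (n p : ℝ) else 0) - 1))
      = if s = d then ∏ p, (n p : ℝ) else 0 := by
  rw [← key_inversion n s d]
  exact Finset.sum_congr rfl fun k _ => by ring

lemma sieve_eq_sum (b : Finset P → ℝ) :
    sieveMatrix n b = ∑ k : Finset P, wgt n b k • basisMatrix n k := by
  ext i j
  set d : Finset P := Finset.univ.filter fun p => j p - i p = 0 with hd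
  have hmem : ∀ p, (p ∈ d) = (i p = j p) := by
    intro p
    simp [hd, sub_eq_zero, eq_comm]
  have hT : ∀ k : Finset P, basisMatrix n k i j
      = ∏ p ∈ k, ((if p ∈ d then (n p : ℝ) else 0) - 1) := by
    intro k
    refine Finset.prod_congr rfl fun p _ => ?_
    simp only [hmem p]
  rw [Matrix.sum_apply]
  simp_rw [Matrix.smul_apply, hT, smul_eq_mul, wgt, div_mul_eq_mul_div, ← Finset.sum_div,
    Finset.sum_mul]
  rw [Finset.sum_comm]
  simp_rw [mul_assoc, ← Finset.mul_sum, key_inversion', mul_ite, mul_zero]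
  rw [Finset.sum_ite_eq' Finset.univ d (fun s => b s * ∏ p, (n p : ℝ))]
  simp only [Finset.mem_univ, if_pos]
  rw [mul_div_assoc, div_self (prodN_ne_zero n), mul_one]
  rfl

end Main

section PSD
variable (n : P → ℕ) [∀ p, NeZero (n p)]

lemma prodN_pos : (0 : ℝ) < ∏ p, (n p : ℝ) := by
  refine Finset.prod_pos fun p _ => ?_
  exact_mod_cast Nat.pos_of_ne_zero (NeZero.ne (n p))

lemma basisMatrix_transpose (k : Finset P) : (basisMatrix n k)ᵀ = basisMatrix n k := by
  ext i j
  rw [Matrix.transpose_apply]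
  exact basisMatrix_symm n k i j

lemma quad_nonneg (k : Finset P) (x : ((p : P) → ZMod (n p)) → ℝ) :
    0 ≤ star x ⬝ᵥ (basisMatrix n k *ᵥ x) := by
  have hN := prodN_pos n
  have key : (∏ p, (n p : ℝ)) * (star x ⬝ᵥ (basisMatrix n k *ᵥ x))
      = (basisMatrix n k *ᵥ x) ⬝ᵥ (basisMatrix n k *ᵥ x) := by
    rw [star_trivial]
    calc (∏ p, (n p : ℝ)) * (x ⬝ᵥ (basisMatrix n k *ᵥ x))
        = x ⬝ᵥ (((∏ p, (n p : ℝ)) • basisMatrix n k) *ᵥ x) := by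
          rw [Matrix.smul_mulVec, dotProduct_smul, smul_eq_mul]
      _ = x ⬝ᵥ ((basisMatrix n k * basisMatrix n k) *ᵥ x) := by rw [← basis_mul_self]
      _ = x ⬝ᵥ (basisMatrix n k *ᵥ (basisMatrix n k *ᵥ x)) := by rw [← Matrix.mulVec_mulVec]
      _ = (x ᵥ* basisMatrix n k) ⬝ᵥ (basisMatrix n k *ᵥ x) := by rw [Matrix.dotProduct_mulVec]
      _ = (basisMatrix n k *ᵥ x) ⬝ᵥ (basisMatrix n k *ᵥ x) := by
          rw [← Matrix.mulVec_transpose, basisMatrix_transpose]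
  have h2 : 0 ≤ (basisMatrix n k *ᵥ x) ⬝ᵥ (basisMatrix n k *ᵥ x) :=
    Finset.sum_nonneg fun i _ => mul_self_nonneg _
  nlinarith [key, h2, hN]

lemma sieve_isHermitian (b : Finset P → ℝ) : (sieveMatrix n b).IsHermitian := by
  ext i j
  simp only [conjTranspose_apply, sieveMatrix, star_trivial]
  congr 1
  exact Finset.filter_congr fun p _ => by rw [sub_eq_zero, sub_eq_zero, eq_comm]

lemma psd_of_comb (b : Finset P → ℝ) (w : Finset P → ℝ) (hw : ∀ k, 0 ≤ w k)
    (hB : sieveMatrix n b = ∑ k : Finset P, w k • basisMatrix n k) :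
    (sieveMatrix n b).PosSemidef := by
  refine Matrix.posSemidef_iff_dotProduct_mulVec.mpr ⟨sieve_isHermitian n b, fun x => ?_⟩
  rw [hB]
  have hsum : star x ⬝ᵥ ((∑ k : Finset P, w k • basisMatrix n k) *ᵥ x)
      = ∑ k : Finset P, star x ⬝ᵥ ((w k • basisMatrix n k) *ᵥ x) := by
    let f : Matrix ((p : P) → ZMod (n p)) ((p : P) → ZMod (n p)) ℝ →+ ℝ :=
      { toFun := fun A => star x ⬝ᵥ (A *ᵥ x),
        map_zero' := by simp,
        map_add' := fun A B => by rw [Matrix.add_mulVec, dotProduct_add] }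
    exact map_sum f _ _
  rw [hsum]
  refine Finset.sum_nonneg fun k _ => ?_
  rw [Matrix.smul_mulVec, dotProduct_smul, smul_eq_mul]
  exact mul_nonneg (hw k) (quad_nonneg n k x)

lemma dot_eq_entry (B : Matrix ((p : P) → ZMod (n p)) ((p : P) → ZMod (n p)) ℝ) (k : Finset P) :
    star (fun i => basisMatrix n k i 0) ⬝ᵥ (B *ᵥ (fun i => basisMatrix n k i 0))
      = (basisMatrix n k * B * basisMatrix n k) 0 0 := by
  rw [star_trivial]
  simp only [dotProduct, mulVec, Matrix.mul_apply, Finset.sum_mul, Finset.mul_sum]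
  rw [Finset.sum_comm]
  refine Finset.sum_congr rfl fun a _ => Finset.sum_congr rfl fun c _ => ?_
  rw [basisMatrix_symm n k 0 a, basisMatrix_symm n k 0 c]
  ring

lemma sandwich (b : Finset P → ℝ) (k : Finset P) :
    basisMatrix n k * sieveMatrix n b * basisMatrix n k
      = (wgt n b k * (∏ p, (n p : ℝ)) ^ 2) • basisMatrix n k := by
  rw [sieve_eq_sum n b, Finset.mul_sum, Finset.sum_mul]
  rw [Finset.sum_eq_single k]
  · rw [Matrix.mul_smul, Matrix.smul_mul, basis_mul_self, Matrix.smul_mul, basis_mul_self]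
    rw [smul_smul, smul_smul]
    congr 1
    ring
  · intro s _ hs
    rw [Matrix.mul_smul, basis_mul_basis_ne n k s (Ne.symm hs)]
    simp
  · intro h
    exact absurd (Finset.mem_univ k) h

end PSD


/-- The matrices `T_k` form a positive basis for the cone of PSD matrices of the
form `B_{ij} = b_{(j-i,P)}`: such a `B` is PSD iff `B = ∑_k w_k T_k` with all
`w_k ≥ 0`. -/
theorem sieveMatrix_posSemidef_iff_posComb (n : P → ℕ) [∀ p, NeZero (n p)]
    (hn : ∀ p, 2 ≤ n p) (b : Finset P → ℝ) :
    (sieveMatrix n b).PosSemidef ↔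
      ∃ w : Finset P → ℝ, (∀ k, 0 ≤ w k) ∧
        sieveMatrix n b = ∑ k : Finset P, w k • basisMatrix n k := by
  constructor
  · intro h
    refine ⟨wgt n b, fun k => ?_, sieve_eq_sum n b⟩
    have h0 := h.dotProduct_mulVec_nonneg (fun i => basisMatrix n k i 0)
    rw [dot_eq_entry, sandwich] at h0
    have hdiag : basisMatrix n k 0 0 = ∏ p ∈ k, ((n p : ℝ) - 1) := by
      simp [basisMatrix]
    rw [Matrix.smul_apply, hdiag, smul_eq_mul] at h0
    have hpos : (0 : ℝ) < (∏ p, (n p : ℝ)) ^ 2 * ∏ p ∈ k, ((n p : ℝ) - 1) := by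
      apply mul_pos (pow_pos (prodN_pos n) 2)
      refine Finset.prod_pos fun p _ => ?_
      have := hn p
      have : (2 : ℝ) ≤ (n p : ℝ) := by exact_mod_cast this
      linarith
    nlinarith [h0, hpos]
  · rintro ⟨w, hw, hB⟩
    exact psd_of_comb n b w hw hB
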